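/- With γ, ρ, ψ, φ_θ, D_γ as above, there exists a constant C > 0 such that for all θ ∈ D_γ, all z ∈ ℂ with |z| > 1 and π/2 < arg z < π, and all (ξ, ξ*) ∈ ℝⁿ × ℝⁿ: |φ_θ(ξ)·φ_θ(ξ) - z - i (Dφ_θ(ξ)^{-2} ξ*)·ξ*| ≥ C (1 + |ξ|² + |ξ*|²). -/

import Mathlib

open MeasureTheory Complex Real Filter Metric
open scoped Classical

noncomputable section

abbrev Rn (n : ℕ) := EuclideanSpace ℝ (Fin n)
abbrev L2 (n : ℕ) := MeasureTheory.Lp ℂ 2 (volume : Measure (Rn n))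
abbrev Op (n : ℕ) := L2 n →L[ℂ] L2 n

/-- The Laplacian of a Schwartz test function. -/
def schwartzLap {n : ℕ} (φ : SchwartzMap (Rn n) ℂ) (x : Rn n) : ℂ :=
  ∑ i : Fin n, iteratedFDeriv ℝ 2 (⇑φ) x ![EuclideanSpace.single i 1, EuclideanSpace.single i 1]

/-- `(-Δ + W - z) u = f` in the sense of distributions, for `u, f ∈ L²`. -/
def IsWeakSolution {n : ℕ} (W : Rn n → ℂ) (z : ℂ) (u f : L2 n) : Prop :=
  ∀ φ : SchwartzMap (Rn n) ℂ,
    ∫ x, u x * (-(schwartzLap φ x) + (W x - z) * φ x) = ∫ x, f x * φ x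

/-- `T` is the (bounded, everywhere defined) resolvent `(-Δ + W - z)⁻¹` on `L²`. -/
def IsResolvent {n : ℕ} (W : Rn n → ℂ) (z : ℂ) (T : Op n) : Prop :=
  (∀ f, IsWeakSolution W z (T f) f) ∧ ∀ u f, IsWeakSolution W z u f → u = T f

/-- `T` is the operator of multiplication by the (bounded) function `g`. -/
def IsMulOp {n : ℕ} (g : Rn n → ℂ) (T : Op n) : Prop :=
  ∀ u : L2 n, (⇑(T u) : Rn n → ℂ) =ᵐ[volume] fun x => g x * u x

/-- The sector `-π/8 < arg λ < 7π/8`. -/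
def Sector : Set ℂ := {z : ℂ | -(π/8) < z.arg ∧ z.arg < 7*π/8}

/-- The rectangle `Ω = (a', a) + i(-γ', b)`. -/
def Rect (a' a γ' b : ℝ) : Set ℂ := {z : ℂ | z.re ∈ Set.Ioo a' a ∧ z.im ∈ Set.Ioo (-γ') b}

/-- `ψ(ξ) = ρ(|ξ|) ξ / |ξ|`. -/
def psiR {n : ℕ} (ρ : ℝ → ℝ) (ξ : Rn n) : Rn n :=
  if ξ = 0 then 0 else (ρ ‖ξ‖ / ‖ξ‖) • ξ

/-- The deformation `φ_θ(ξ) = ξ + θ ψ(ξ)`, with values in `ℂⁿ`. -/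
def phiTheta {n : ℕ} (ρ : ℝ → ℝ) (θ : ℂ) (ξ : Rn n) : Fin n → ℂ :=
  fun j => (ξ j : ℂ) + θ * (psiR ρ ξ j : ℂ)

/-- The bilinear (non-Hermitian) dot product on `ℂⁿ`. -/
def dotC {n : ℕ} (v w : Fin n → ℂ) : ℂ := ∑ j, v j * w j

/-- The Jacobian matrix `Dψ(ξ) = (ρ(|ξ|)/|ξ|) I + (ρ'(|ξ|)/|ξ|² - ρ(|ξ|)/|ξ|³) ξξᵀ`. -/
def DpsiMat {n : ℕ} (ρ : ℝ → ℝ) (ξ : Rn n) : Matrix (Fin n) (Fin n) ℝ :=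
  if ξ = 0 then 0 else
    (ρ ‖ξ‖ / ‖ξ‖) • (1 : Matrix (Fin n) (Fin n) ℝ)
      + (deriv ρ ‖ξ‖ / ‖ξ‖ ^ 2 - ρ ‖ξ‖ / ‖ξ‖ ^ 3) • Matrix.of fun i j => ξ i * ξ j

/-- The Jacobian matrix `Dφ_θ(ξ) = I + θ Dψ(ξ)` (a complex symmetric matrix). -/
def DphiMat {n : ℕ} (ρ : ℝ → ℝ) (θ : ℂ) (ξ : Rn n) : Matrix (Fin n) (Fin n) ℂ :=
  1 + θ • (DpsiMat ρ ξ).map Complex.ofReal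

/-- The quadratic form `(Dφ_θ(ξ)⁻² ξ*)·ξ*` with `Dφ_θ⁻² = (Dφ_θ⁻¹)ᵀ Dφ_θ⁻¹`. -/
def qForm {n : ℕ} (ρ : ℝ → ℝ) (θ : ℂ) (ξ ξs : Rn n) : ℂ :=
  dotC ((((DphiMat ρ θ ξ)⁻¹).transpose * (DphiMat ρ θ ξ)⁻¹).mulVec fun j => (ξs j : ℂ))
    (fun j => (ξs j : ℂ))

/-- The region `D_γ = {θ ∈ ℂ : |Re θ| + |Im θ| < γ}`. -/
def Dgamma (γ : ℝ) : Set ℂ := {θ : ℂ | |θ.re| + |θ.im| < γ}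


/-! ### Auxiliary lemmas for `principal_symbol_elliptic` -/

lemma pse_tan_sq : Real.tan (π/8) ^ 2 + 2 * Real.tan (π/8) = 1 := by
  have h : Real.tan (2 * (π/8)) = 2 * Real.tan (π/8) / (1 - Real.tan (π/8) ^ 2) :=
    Real.tan_two_mul
  have h2 : (2:ℝ) * (π/8) = π/4 := by ring
  rw [h2, Real.tan_pi_div_four] at h
  have hne : 1 - Real.tan (π/8) ^ 2 ≠ 0 := by
    intro h0
    rw [h0] at h
    simp at h
  field_simp at h
  linarith

lemma pse_tan_pos : 0 < Real.tan (π/8) := by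
  apply Real.tan_pos_of_pos_of_lt_pi_div_two
  · positivity
  · linarith [Real.pi_pos]

lemma pse_sq_re (w : ℂ) : (w^2).re = w.re^2 - w.im^2 := by
  rw [sq]; simp [Complex.mul_re]; ring

lemma pse_sq_im (w : ℂ) : (w^2).im = 2 * w.re * w.im := by
  rw [sq]; simp [Complex.mul_im]; ring

lemma pse_cone_sq {l : ℝ} (hl0 : 0 ≤ l) (hl1 : l < 1) {w : ℂ} (hre : 0 ≤ w.re)
    (him : |w.im| ≤ l * w.re) :
    (1 - l^2) * w.re^2 ≤ (w^2).re ∧ |(w^2).im| ≤ (2*l/(1-l^2)) * (w^2).re := by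
  have h1 : w.im^2 ≤ l^2 * w.re^2 := by nlinarith [abs_nonneg w.im, _root_.sq_abs w.im]
  have hre2 : (1 - l^2) * w.re^2 ≤ (w^2).re := by rw [pse_sq_re]; nlinarith
  refine ⟨hre2, ?_⟩
  rw [pse_sq_im, abs_mul, abs_mul, _root_.abs_two, _root_.abs_of_nonneg hre]
  have h2 : 2 * w.re * |w.im| ≤ 2 * l * w.re^2 := by
    nlinarith [abs_nonneg w.im]
  have hpos : (0:ℝ) < 1 - l^2 := by nlinarith
  have h3 : 2 * l * w.re ^ 2 ≤ (2*l/(1-l^2)) * (w^2).re := by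
    rw [div_mul_eq_mul_div, le_div_iff₀ hpos]; nlinarith
  linarith

lemma pse_cone_inv {k : ℝ} (hk0 : 0 ≤ k) {w : ℂ} (hre : 0 < w.re)
    (him : |w.im| ≤ k * w.re) :
    1/((1+k^2) * w.re) ≤ (w⁻¹).re ∧ |(w⁻¹).im| ≤ k * (w⁻¹).re := by
  have hns : Complex.normSq w = w.re^2 + w.im^2 := Complex.normSq_apply w |>.trans (by ring)
  have hns_pos : 0 < Complex.normSq w := by rw [hns]; positivity
  have hns_le : Complex.normSq w ≤ (1+k^2) * w.re^2 := by
    rw [hns]; nlinarith [abs_nonneg w.im, _root_.sq_abs w.im]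
  constructor
  · rw [Complex.inv_re, div_le_div_iff₀ (by positivity) hns_pos]
    calc 1 * Complex.normSq w ≤ (1+k^2) * w.re^2 := by linarith
    _ = w.re * ((1+k^2) * w.re) := by ring
  · rw [Complex.inv_im, Complex.inv_re, abs_div, abs_neg, _root_.abs_of_pos hns_pos,
      ← mul_div_assoc]
    gcongr

lemma pse_mu_cone {γ l s : ℝ} {θ : ℂ} (hθ : |θ.re| + |θ.im| ≤ γ)
    (hs : 0 ≤ s) (hγs : γ * s ≤ l) (hl1 : l ≤ 1) :
    1 - l ≤ (1 + θ * (s:ℂ)).re ∧ (1 + θ * (s:ℂ)).re ≤ 1 + l ∧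
      |(1 + θ * (s:ℂ)).im| ≤ l * (1 + θ * (s:ℂ)).re := by
  have hre : (1 + θ * (s:ℂ)).re = 1 + θ.re * s := by simp [Complex.mul_re]
  have him : (1 + θ * (s:ℂ)).im = θ.im * s := by simp [Complex.mul_im]
  have h1 : |θ.re| * s ≤ γ * s := by
    apply mul_le_mul_of_nonneg_right _ hs; nlinarith [abs_nonneg θ.im]
  have h2 : |θ.im| * s ≤ γ * s := by
    apply mul_le_mul_of_nonneg_right _ hs; nlinarith [abs_nonneg θ.re]
  have hre1 : -(|θ.re| * s) ≤ θ.re * s := by nlinarith [neg_abs_le θ.re]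
  have hre2 : θ.re * s ≤ |θ.re| * s := mul_le_mul_of_nonneg_right (le_abs_self θ.re) hs
  refine ⟨by rw [hre]; linarith, by rw [hre]; linarith, ?_⟩
  rw [him, hre, abs_mul, _root_.abs_of_nonneg hs]
  have key : |θ.im| * s + l * (|θ.re| * s) ≤ l := by
    have h4 : l * (|θ.re| * s) ≤ |θ.re| * s := by nlinarith [abs_nonneg θ.re]
    have h5 : (|θ.im| + |θ.re|) * s ≤ γ * s := by
      apply mul_le_mul_of_nonneg_right _ hs; linarith
    nlinarith
  nlinarith

lemma pse_w_cone {γ l : ℝ} {θ : ℂ} (hθ : |θ.re| + |θ.im| ≤ γ) {r c : ℝ}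
    (hr : 0 ≤ r) (hc0 : 0 ≤ c) (hcl : γ * c ≤ l * r) (hl0 : 0 ≤ l) (hl1 : l ≤ 1) :
    (1-l) * r ≤ ((r:ℂ) + θ * (c:ℂ)).re ∧
      |((r:ℂ) + θ * (c:ℂ)).im| ≤ l * ((r:ℂ) + θ * (c:ℂ)).re := by
  have hre : ((r:ℂ) + θ * (c:ℂ)).re = r + θ.re * c := by simp [Complex.mul_re]
  have him : ((r:ℂ) + θ * (c:ℂ)).im = θ.im * c := by simp [Complex.mul_im]
  have h1 : |θ.re| * c ≤ γ * c := by
    apply mul_le_mul_of_nonneg_right _ hc0; nlinarith [abs_nonneg θ.im]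
  have hre1 : -(|θ.re| * c) ≤ θ.re * c := by nlinarith [neg_abs_le θ.re]
  have hre2 : θ.re * c ≤ |θ.re| * c := mul_le_mul_of_nonneg_right (le_abs_self θ.re) hc0
  refine ⟨by rw [hre]; linarith, ?_⟩
  rw [him, hre, abs_mul, _root_.abs_of_nonneg hc0]
  have key : |θ.im| * c + l * (|θ.re| * c) ≤ l * r := by
    have h4 : l * (|θ.re| * c) ≤ |θ.re| * c := by nlinarith [abs_nonneg θ.re]
    have h5 : (|θ.im| + |θ.re|) * c ≤ γ * c := by
      apply mul_le_mul_of_nonneg_right _ hc0; linarith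
    nlinarith
  nlinarith [abs_nonneg θ.im, mul_le_mul_of_nonneg_left hre1 hl0]

lemma pse_norm_sq_eq_sum {n : ℕ} (ξ : Rn n) : ‖ξ‖^2 = ∑ j, (ξ j)^2 := by
  rw [EuclideanSpace.norm_eq]
  rw [Real.sq_sqrt (by positivity)]
  congr 1; ext j; rw [Real.norm_eq_abs, _root_.sq_abs]

lemma pse_dotC_phi {n : ℕ} (ρ : ℝ → ℝ) (θ : ℂ) (ξ : Rn n) (hρ00 : ρ 0 = 0) :
    dotC (phiTheta ρ θ ξ) (phiTheta ρ θ ξ)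
      = (((‖ξ‖ : ℝ) : ℂ) + θ * ((ρ ‖ξ‖ : ℝ) : ℂ))^2 := by
  rcases eq_or_ne ξ 0 with h | h
  · subst h
    have h0 : ∀ j : Fin n, ((0 : Rn n) j : ℝ) = 0 := fun j => rfl
    simp [dotC, phiTheta, psiR, hρ00, h0]
  · have hr0 : 0 < ‖ξ‖ := norm_pos_iff.mpr h
    have hrC : ((‖ξ‖:ℝ):ℂ) ≠ 0 := Complex.ofReal_ne_zero.mpr (ne_of_gt hr0)
    have hφ : ∀ j, phiTheta ρ θ ξ j
        = (1 + θ * ((ρ ‖ξ‖ / ‖ξ‖ : ℝ):ℂ)) * ((ξ j : ℝ):ℂ) := by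
      intro j
      simp only [phiTheta, psiR, if_neg h, PiLp.smul_apply, smul_eq_mul]
      push_cast
      ring
    rw [dotC]
    have : ∑ j, phiTheta ρ θ ξ j * phiTheta ρ θ ξ j
        = (1 + θ * ((ρ ‖ξ‖ / ‖ξ‖ : ℝ):ℂ))^2 * ∑ j, ((ξ j : ℝ):ℂ)^2 := by
      rw [Finset.mul_sum]
      apply Finset.sum_congr rfl
      intro j _
      rw [hφ j]; ring
    rw [this]
    have hsum : (∑ j, ((ξ j : ℝ):ℂ)^2) = (((‖ξ‖^2 : ℝ)) : ℂ) := by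
      rw [pse_norm_sq_eq_sum]; push_cast; ring
    rw [hsum]
    push_cast
    field_simp
    all_goals ring

lemma pse_matrix_inv_q {n : ℕ} (x y : Fin n → ℝ) (a b r : ℝ) (θ : ℂ)
    (hr : r ≠ 0) (hsum : ∑ j, (x j)^2 = r^2)
    (hp : (1 + θ * ((a/r : ℝ):ℂ)) ≠ 0) (hp2 : (1 + θ * ((b : ℝ):ℂ)) ≠ 0) :
    dotC (((((1 : Matrix (Fin n) (Fin n) ℂ) + θ • (((a/r) • (1 : Matrix (Fin n) (Fin n) ℝ)
        + (b/r^2 - a/r^3) • Matrix.of fun i j => x i * x j).map Complex.ofReal))⁻¹).transpose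
      * ((1 : Matrix (Fin n) (Fin n) ℂ) + θ • (((a/r) • (1 : Matrix (Fin n) (Fin n) ℝ)
        + (b/r^2 - a/r^3) • Matrix.of fun i j => x i * x j).map Complex.ofReal))⁻¹).mulVec
        fun j => (y j : ℂ)) (fun j => (y j : ℂ))
      = ((1 + θ * ((a/r : ℝ):ℂ))^2)⁻¹ * ((((∑ j, (y j)^2) - (∑ j, x j * y j)^2/r^2 : ℝ)) : ℂ)
        + ((1 + θ * ((b : ℝ):ℂ))^2)⁻¹ * ((((∑ j, x j * y j)^2/r^2 : ℝ)) : ℂ) := by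
  have hrC : ((r : ℝ) : ℂ) ≠ 0 := Complex.ofReal_ne_zero.mpr hr
  set p : ℂ := 1 + θ * ((a/r : ℝ):ℂ) with hpdef
  set p2 : ℂ := 1 + θ * ((b : ℝ):ℂ) with hp2def
  set q : ℂ := θ * ((b/r^2 - a/r^3 : ℝ) : ℂ) with hqdef
  set P : Matrix (Fin n) (Fin n) ℂ := Matrix.of (fun i j => ((x i : ℝ) : ℂ) * ((x j : ℝ) : ℂ)) with hPdef
  set e : ℂ := -q / (p * p2) with hedef
  set R : ℂ := ((r : ℝ) : ℂ)^2 with hRdef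
  have hRne : R ≠ 0 := pow_ne_zero 2 hrC
  have hM : (1 : Matrix (Fin n) (Fin n) ℂ) + θ • (((a/r) • (1 : Matrix (Fin n) (Fin n) ℝ)
        + (b/r^2 - a/r^3) • Matrix.of fun i j => x i * x j).map Complex.ofReal)
      = p • 1 + q • P := by
    ext i j
    simp only [Matrix.add_apply, Matrix.smul_apply, Matrix.one_apply, Matrix.map_apply,
      Matrix.of_apply, smul_eq_mul, hpdef, hqdef, hPdef]
    rcases eq_or_ne i j with h | h
    · subst h; simp only [if_pos rfl]; push_cast; field_simp; ring
    · simp only [if_neg h]; push_cast; ring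
  have hsumC : (∑ k, ((x k : ℝ):ℂ)^2) = R := by
    rw [show R = (((r^2 : ℝ)) : ℂ) by rw [hRdef]; push_cast; ring, ← hsum]
    push_cast; ring
  have hPP : P * P = R • P := by
    ext i j
    simp only [Matrix.mul_apply, Matrix.smul_apply, Matrix.of_apply, hPdef, smul_eq_mul]
    calc ∑ k, ((x i : ℝ):ℂ) * ((x k : ℝ):ℂ) * (((x k : ℝ):ℂ) * ((x j : ℝ):ℂ))
        = (∑ k, ((x k : ℝ):ℂ)^2) * (((x i : ℝ):ℂ) * ((x j : ℝ):ℂ)) := by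
          rw [Finset.sum_mul]; apply Finset.sum_congr rfl; intros; ring
      _ = R * (((x i : ℝ):ℂ) * ((x j : ℝ):ℂ)) := by rw [hsumC]
  have key1 : q * R = p2 - p := by
    rw [hqdef, hRdef, hpdef, hp2def]
    push_cast
    field_simp
    ring
  have hpp2 : p * p2 ≠ 0 := mul_ne_zero hp hp2
  have he' : e * (p * p2) = -q := by rw [hedef]; field_simp
  have hc : p * e + q * p⁻¹ + q * e * R = 0 := by
    have h2 : (p * e + q * p⁻¹ + q * e * R) * (p * (p * p2)) = 0 := by
      have : (p * e + q * p⁻¹ + q * e * R) * (p * (p * p2))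
          = (e * (p * p2)) * (p * p) + q * (p⁻¹ * p) * (p * p2) + (q * R) * (e * (p * p2)) * p := by
        ring
      rw [this, he', inv_mul_cancel₀ hp, key1]
      ring
    rcases mul_eq_zero.mp h2 with h | h
    · exact h
    · exact absurd h (by simp [hp, hp2])
  have expand : ∀ a' b' c' d' : ℂ, (a' • (1:Matrix (Fin n) (Fin n) ℂ) + b' • P) * (c' • 1 + d' • P)
      = (a'*c') • 1 + (a'*d' + b'*c' + b'*d'*R) • P := by
    intro a' b' c' d'
    rw [add_mul, mul_add, mul_add]
    simp only [smul_mul_assoc, mul_smul_comm, smul_smul, one_mul, mul_one, hPP]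
    rw [add_smul, add_smul]
    module
  have hMN : (p • (1:Matrix (Fin n) (Fin n) ℂ) + q • P) * (p⁻¹ • 1 + e • P) = 1 := by
    rw [expand, mul_inv_cancel₀ hp, one_smul, hc, zero_smul, add_zero]
  have hinv : ((1 : Matrix (Fin n) (Fin n) ℂ) + θ • (((a/r) • (1 : Matrix (Fin n) (Fin n) ℝ)
        + (b/r^2 - a/r^3) • Matrix.of fun i j => x i * x j).map Complex.ofReal))⁻¹
      = p⁻¹ • 1 + e • P := by
    rw [hM]; exact Matrix.inv_eq_right_inv hMN
  have hPt : P.transpose = P := by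
    ext i j; simp only [Matrix.transpose_apply, Matrix.of_apply, hPdef]; ring
  have hNt : (p⁻¹ • (1:Matrix (Fin n) (Fin n) ℂ) + e • P).transpose
      = p⁻¹ • 1 + e • P := by
    rw [Matrix.transpose_add, Matrix.transpose_smul, Matrix.transpose_smul,
      Matrix.transpose_one, hPt]
  rw [hinv, hNt, expand]
  set c1 : ℂ := p⁻¹ * p⁻¹ with hc1
  set c2 : ℂ := p⁻¹ * e + e * p⁻¹ + e * e * R with hc2
  set v : Fin n → ℂ := fun j => ((y j : ℝ) : ℂ) with hv
  set D : ℂ := ∑ j, ((x j : ℝ):ℂ) * ((y j : ℝ):ℂ) with hD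
  have hPv : ∀ j, (P.mulVec v) j = ((x j:ℝ):ℂ) * D := by
    intro j
    simp only [Matrix.mulVec, dotProduct, Matrix.of_apply, hPdef, hD, hv, Finset.mul_sum]
    apply Finset.sum_congr rfl; intros; ring
  have hmv : ((c1 • (1:Matrix (Fin n) (Fin n) ℂ) + c2 • P).mulVec v)
      = fun j => c1 * v j + c2 * (((x j:ℝ):ℂ) * D) := by
    ext j
    rw [Matrix.add_mulVec, Matrix.smul_mulVec, Matrix.smul_mulVec,
      Matrix.one_mulVec]
    simp only [Pi.add_apply, Pi.smul_apply, smul_eq_mul]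
    rw [hPv j]
  rw [hmv, dotC]
  have hsplit : ∑ j, (c1 * v j + c2 * (((x j:ℝ):ℂ) * D)) * v j
      = c1 * (∑ j, v j * v j) + c2 * (D * D) := by
    simp only [add_mul]
    rw [Finset.sum_add_distrib]
    congr 1
    · rw [Finset.mul_sum]; apply Finset.sum_congr rfl; intros; ring
    · calc ∑ j, c2 * (((x j:ℝ):ℂ) * D) * v j
          = (c2 * D) * ∑ j, ((x j:ℝ):ℂ) * v j := by
            rw [Finset.mul_sum]; apply Finset.sum_congr rfl; intros; ring
        _ = c2 * (D * D) := by rw [← hD]; ring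
  rw [hsplit]
  have key2 : p⁻¹ + e * R = p2⁻¹ := by
    have h2 : (p⁻¹ + e * R - p2⁻¹) * (p * (p2 * p2)) = 0 := by
      have : (p⁻¹ + e * R - p2⁻¹) * (p * (p2 * p2))
          = (p⁻¹ * p) * (p2 * p2) + R * (e * (p * p2)) * p2 - (p2⁻¹ * p2) * (p * p2) := by ring
      rw [this, he', inv_mul_cancel₀ hp, inv_mul_cancel₀ hp2]
      have : R * -q * p2 = -((q * R) * p2) := by ring
      rw [this, key1]
      ring
    rcases mul_eq_zero.mp h2 with h | h
    · exact sub_eq_zero.mp h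
    · exact absurd h (by simp [hp, hp2])
  have key3 : c1 + c2 * R = (p2^2)⁻¹ := by
    rw [show (p2^2)⁻¹ = p2⁻¹ * p2⁻¹ by rw [sq, mul_inv], ← key2, hc1, hc2]; ring
  have hc1' : c1 = (p^2)⁻¹ := by rw [hc1, sq, mul_inv]
  have hvv : (∑ j, v j * v j) = (((∑ j, (y j)^2 : ℝ)) : ℂ) := by
    push_cast; apply Finset.sum_congr rfl; intros; ring
  have hDD : D = (((∑ j, x j * y j : ℝ)) : ℂ) := by rw [hD]; push_cast; rfl
  rw [hvv, Complex.ofReal_sub, Complex.ofReal_div, Complex.ofReal_pow, Complex.ofReal_pow,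
    ← hDD, ← hRdef, ← hc1', ← key3]
  field_simp
  ring

lemma pse_qForm_zero {n : ℕ} (ρ : ℝ → ℝ) (θ : ℂ) (ξs : Rn n) :
    qForm ρ θ 0 ξs = ((‖ξs‖^2 : ℝ) : ℂ) := by
  have h : DphiMat ρ θ (0 : Rn n) = 1 := by
    rw [DphiMat, DpsiMat, if_pos rfl]
    simp
  rw [qForm, h, inv_one, Matrix.transpose_one, one_mul, Matrix.one_mulVec, dotC]
  rw [pse_norm_sq_eq_sum]
  push_cast
  apply Finset.sum_congr rfl; intros; ring

lemma pse_qForm_eq {n : ℕ} (ρ : ℝ → ℝ) (θ : ℂ) (ξ ξs : Rn n) (hξ : ξ ≠ 0)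
    (hp : (1 + θ * ((ρ ‖ξ‖ / ‖ξ‖ : ℝ):ℂ)) ≠ 0)
    (hp2 : (1 + θ * ((deriv ρ ‖ξ‖ : ℝ):ℂ)) ≠ 0) :
    qForm ρ θ ξ ξs
      = ((1 + θ * ((ρ ‖ξ‖ / ‖ξ‖ : ℝ):ℂ))^2)⁻¹
          * ((((∑ j, (ξs j)^2) - (∑ j, ξ j * ξs j)^2/‖ξ‖^2 : ℝ)) : ℂ)
        + ((1 + θ * ((deriv ρ ‖ξ‖ : ℝ):ℂ))^2)⁻¹
          * ((((∑ j, ξ j * ξs j)^2/‖ξ‖^2 : ℝ)) : ℂ) := by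
  have hr : ‖ξ‖ ≠ 0 := norm_ne_zero_iff.mpr hξ
  have h := pse_matrix_inv_q (fun j => ξ j) (fun j => ξs j) (ρ ‖ξ‖) (deriv ρ ‖ξ‖) ‖ξ‖ θ hr
    (pse_norm_sq_eq_sum ξ).symm hp hp2
  rw [qForm, DphiMat, DpsiMat, if_neg hξ]
  exact h


lemma pse_tau_lt_one {t : ℝ} (h : t^2 + 2*t = 1) (h0 : 0 < t) : t < 1 := by nlinarith

lemma pse_one_sub_sq_pos {l : ℝ} (h0 : 0 ≤ l) (h1 : l < 1) : (0:ℝ) < 1 - l^2 := by nlinarith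

lemma pse_k_lt_one {l t : ℝ} (hl0 : 0 ≤ l) (hlt : l < t) (ht : t^2 + 2*t = 1)
    (h1l2 : (0:ℝ) < 1 - l^2) : 2*l/(1-l^2) < 1 := by
  rw [div_lt_one h1l2]; nlinarith

lemma pse_d1_le_one {k l : ℝ} (hk0 : 0 ≤ k) (hl0 : 0 ≤ l) :
    1/((1+k^2)*(1+l)^2) ≤ 1 := by
  rw [div_le_one (by positivity)]
  nlinarith [sq_nonneg k, sq_nonneg l, mul_nonneg (sq_nonneg k) (sq_nonneg (1+l))]

lemma pse_abs_le_sub {a x y : ℝ} (ha : 0 ≤ a) (h2 : a^2 = x^2 + y^2)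
    (hx : x ≤ 0) (hy : 0 ≤ y) : a ≤ y - x := by
  nlinarith [mul_nonneg (neg_nonneg.mpr hx) hy]

lemma pse_sub_le_two_abs {a x y : ℝ} (ha : 0 ≤ a) (h : a^2 = x^2 + y^2) :
    x - y ≤ 2*a := by
  nlinarith [sq_nonneg (x+y), sq_nonneg (x-y)]

set_option maxHeartbeats 1000000 in
/-- equation (3.20) of the paper; semiclassical ellipticity of the
principal symbol.  There is `C > 0` such that for all `θ ∈ D_γ`, all `z` with
`|z| > 1` and `π/2 < arg z < π`, and all `(ξ, ξ*) ∈ ℝⁿ × ℝⁿ`,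
`|φ_θ(ξ)·φ_θ(ξ) - z - i (Dφ_θ(ξ)⁻² ξ*)·ξ*| ≥ C (1 + |ξ|² + |ξ*|²)`. -/
theorem principal_symbol_elliptic
    (n : ℕ) (γ : ℝ) (hγ : 0 < γ)
    (ρ : ℝ → ℝ) (hρ : ContDiff ℝ (⊤ : ℕ∞) ρ)
    (hρ0 : ∃ t₀ > 0, ∀ t ≤ t₀, ρ t = 0)
    (hρ1 : ∃ t₁ : ℝ, ∀ t ≥ t₁, ρ t = 1)
    (hρ' : ∀ t ≥ (0:ℝ), 0 ≤ deriv ρ t ∧ deriv ρ t < γ⁻¹ * Real.tan (π/8)) :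
    ∃ C > 0, ∀ θ ∈ Dgamma γ, ∀ z : ℂ, 1 < ‖z‖ → π/2 < z.arg → z.arg < π →
      ∀ ξ ξs : Rn n,
        C * (1 + ‖ξ‖ ^ 2 + ‖ξs‖ ^ 2)
          ≤ ‖
              (dotC (phiTheta ρ θ ξ) (phiTheta ρ θ ξ) - z
                - Complex.I * qForm ρ θ ξ ξs)‖ := by
  classical
  -- extract data about ρ
  obtain ⟨t₀, ht₀pos, ht₀⟩ := hρ0
  obtain ⟨t₁, ht₁⟩ := hρ1
  have hρ00 : ρ 0 = 0 := ht₀ 0 (le_of_lt ht₀pos)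
  have hdiff : Differentiable ℝ ρ := hρ.differentiable (by simp)
  have hdc : Continuous (deriv ρ) := hρ.continuous_deriv (by exact_mod_cast le_top)
  have hT0 : (0:ℝ) ≤ max t₁ 1 := le_trans zero_le_one (le_max_right _ _)
  obtain ⟨ts, hts_mem, hts_max⟩ := (isCompact_Icc (a := (0:ℝ)) (b := max t₁ 1)).exists_isMaxOn
    (Set.nonempty_Icc.mpr hT0) hdc.continuousOn
  set B := deriv ρ ts with hB
  have hB0 : 0 ≤ B := (hρ' ts hts_mem.1).1
  have hBτ : B < γ⁻¹ * Real.tan (π/8) := (hρ' ts hts_mem.1).2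
  have hBall : ∀ t, 0 ≤ t → deriv ρ t ≤ B := by
    intro t ht
    by_cases htT : t ≤ max t₁ 1
    · exact hts_max ⟨ht, htT⟩
    · push_neg at htT
      have h1 : ρ =ᶠ[nhds t] fun _ => (1:ℝ) :=
        Filter.eventuallyEq_of_mem
          (Ioi_mem_nhds (lt_of_le_of_lt (le_max_left t₁ 1) htT))
          (fun x hx => ht₁ x (le_of_lt hx))
      rw [h1.deriv_eq, deriv_const]
      exact hB0
  have hmono : MonotoneOn ρ (Set.Ici (0:ℝ)) := by
    apply monotoneOn_of_deriv_nonneg (convex_Ici 0) hdiff.continuous.continuousOn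
      hdiff.differentiableOn
    intro x hx
    rw [interior_Ici] at hx
    exact (hρ' x (le_of_lt hx)).1
  have hρ_nonneg : ∀ t, 0 ≤ t → 0 ≤ ρ t := by
    intro t ht
    have := hmono (Set.self_mem_Ici) (Set.mem_Ici.mpr ht) ht
    rwa [hρ00] at this
  have hρle : ∀ t, 0 ≤ t → ρ t ≤ B * t := by
    intro t ht
    have hseg := norm_image_sub_le_of_norm_deriv_le_segment'
      (f := ρ) (f' := deriv ρ) (a := 0) (b := t) (C := B)
      (fun x _ => (hdiff x).hasDerivAt.hasDerivWithinAt)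
      (fun x hx => by
        rw [Real.norm_eq_abs, _root_.abs_of_nonneg (hρ' x hx.1).1]
        exact hBall x hx.1)
      t (Set.right_mem_Icc.mpr ht)
    rw [hρ00, sub_zero, sub_zero, Real.norm_eq_abs] at hseg
    exact le_trans (le_abs_self _) hseg
  -- constants
  have hτ2 : Real.tan (π/8)^2 + 2*Real.tan (π/8) = 1 := pse_tan_sq
  have hτpos : 0 < Real.tan (π/8) := pse_tan_pos
  have hτ1 : Real.tan (π/8) < 1 := pse_tau_lt_one hτ2 hτpos
  set l := γ * B with hl
  have hl0 : 0 ≤ l := mul_nonneg (le_of_lt hγ) hB0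
  have hlτ : l < Real.tan (π/8) := by
    have h := mul_lt_mul_of_pos_left hBτ hγ
    rwa [show γ * (γ⁻¹ * Real.tan (π/8)) = Real.tan (π/8) by field_simp] at h
  have hl1 : l < 1 := lt_trans hlτ hτ1
  have h1l2 : (0:ℝ) < 1 - l^2 := pse_one_sub_sq_pos hl0 hl1
  set k := 2*l/(1-l^2) with hk
  have hk0 : 0 ≤ k := div_nonneg (by linarith) (le_of_lt h1l2)
  have hk1 : k < 1 := by
    rw [hk]; exact pse_k_lt_one hl0 hlτ hτ2 h1l2
  set d1 := 1/((1+k^2)*(1+l)^2) with hd1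
  set d2 := (1-l^2)*(1-l)^2 with hd2
  have hd1p : 0 < d1 := by rw [hd1]; positivity
  have hd2p : 0 < d2 := mul_pos h1l2 (pow_pos (by linarith) 2)
  have hd1le1 : d1 ≤ 1 := by
    rw [hd1]; exact pse_d1_le_one hk0 hl0
  set Cv := min ((1-k)*d2) (min ((1-k)*d1) 1) / 2 with hCv
  have hCpos : 0 < Cv := by
    rw [hCv]
    apply div_pos _ (by norm_num : (0:ℝ) < 2)
    apply lt_min
    · exact mul_pos (by linarith only [hk1]) hd2p
    · exact lt_min (mul_pos (by linarith only [hk1]) hd1p) one_pos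
  have h2Cv : 2 * Cv = min ((1-k)*d2) (min ((1-k)*d1) 1) := by rw [hCv]; ring
  have hmin1 : 2*Cv ≤ (1-k)*d2 := by rw [h2Cv]; exact min_le_left _ _
  have hmin2 : 2*Cv ≤ (1-k)*d1 := by
    rw [h2Cv]; exact le_trans (min_le_right _ _) (min_le_left _ _)
  have hmin3 : 2*Cv ≤ 1 := by
    rw [h2Cv]; exact le_trans (min_le_right _ _) (min_le_right _ _)
  refine ⟨Cv, hCpos, ?_⟩
  intro θ hθ z hzabs hz1 hz2 ξ ξs
  have hθlt : |θ.re| + |θ.im| < γ := hθ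
  have hθ' : |θ.re| + |θ.im| ≤ γ := le_of_lt hθlt
  have hrnn : 0 ≤ ‖ξ‖ := norm_nonneg ξ
  -- the `a` part
  set w := ((‖ξ‖ : ℝ) : ℂ) + θ * ((ρ ‖ξ‖ : ℝ) : ℂ) with hw
  have hcl : γ * ρ ‖ξ‖ ≤ l * ‖ξ‖ := by
    rw [hl]
    calc γ * ρ ‖ξ‖ ≤ γ * (B * ‖ξ‖) :=
          mul_le_mul_of_nonneg_left (hρle ‖ξ‖ hrnn) (le_of_lt hγ)
      _ = γ * B * ‖ξ‖ := by ring
  obtain ⟨hwre, hwim⟩ := pse_w_cone hθ' hrnn (hρ_nonneg _ hrnn) hcl hl0 (le_of_lt hl1)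
  have hwre0 : 0 ≤ w.re :=
    le_trans (mul_nonneg (by linarith only [hl1]) hrnn) hwre
  obtain ⟨hA1, hA2⟩ := pse_cone_sq hl0 hl1 hwre0 hwim
  rw [← hk] at hA2
  have hAre : d2 * ‖ξ‖^2 ≤ (w^2).re := by
    have hsq : ((1-l)*‖ξ‖)^2 ≤ w.re^2 :=
      pow_le_pow_left₀ (mul_nonneg (by linarith only [hl1]) hrnn) hwre 2
    calc d2 * ‖ξ‖^2 = (1-l^2) * ((1-l)*‖ξ‖)^2 := by rw [hd2]; ring
      _ ≤ (1-l^2) * w.re^2 := mul_le_mul_of_nonneg_left hsq (le_of_lt h1l2)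
      _ ≤ _ := hA1
  -- the `b` part
  have hmusq : ∀ μ : ℂ, 1 - l ≤ μ.re → μ.re ≤ 1 + l → |μ.im| ≤ l * μ.re →
      d1 ≤ ((μ^2)⁻¹).re ∧ |((μ^2)⁻¹).im| ≤ k * ((μ^2)⁻¹).re := by
    intro μ h1 h2 h3
    have hre0 : 0 ≤ μ.re := by linarith only [h1, hl1]
    have hrepos : 0 < μ.re := by linarith only [h1, hl1]
    obtain ⟨hs1, hs2⟩ := pse_cone_sq hl0 hl1 hre0 h3
    rw [← hk] at hs2
    have hsq_pos : 0 < (μ^2).re :=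
      lt_of_lt_of_le (mul_pos h1l2 (pow_pos hrepos 2)) hs1
    obtain ⟨hi1, hi2⟩ := pse_cone_inv hk0 hsq_pos hs2
    refine ⟨?_, hi2⟩
    refine le_trans ?_ hi1
    rw [hd1]
    have hμsq_le : (μ^2).re ≤ (1+l)^2 := by
      rw [pse_sq_re]
      have h4 : μ.re^2 ≤ (1+l)^2 := pow_le_pow_left₀ hre0 h2 2
      linarith only [h4, sq_nonneg μ.im]
    exact one_div_le_one_div_of_le (by positivity)
      (mul_le_mul_of_nonneg_left hμsq_le (by positivity))
  have hb : d1 * ‖ξs‖^2 ≤ (qForm ρ θ ξ ξs).re ∧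
      |(qForm ρ θ ξ ξs).im| ≤ k * (qForm ρ θ ξ ξs).re := by
    rcases eq_or_ne ξ 0 with hxi | hxi
    · subst hxi
      rw [pse_qForm_zero]
      constructor
      · rw [Complex.ofReal_re]
        have := mul_le_mul_of_nonneg_right hd1le1 (sq_nonneg ‖ξs‖)
        linarith only [this]
      · rw [Complex.ofReal_im, Complex.ofReal_re, abs_zero]
        positivity
    · have hr0 : 0 < ‖ξ‖ := norm_pos_iff.mpr hxi
      have hsρ0 : 0 ≤ ρ ‖ξ‖ / ‖ξ‖ := div_nonneg (hρ_nonneg _ hrnn) hrnn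
      have hsρl : γ * (ρ ‖ξ‖ / ‖ξ‖) ≤ l := by
        rw [hl]
        exact mul_le_mul_of_nonneg_left
          ((div_le_iff₀ hr0).mpr (hρle ‖ξ‖ hrnn)) (le_of_lt hγ)
      obtain ⟨hp1, hp2', hp3⟩ := pse_mu_cone hθ' hsρ0 hsρl (le_of_lt hl1)
      have hsd0 : 0 ≤ deriv ρ ‖ξ‖ := (hρ' _ hrnn).1
      have hsdl : γ * deriv ρ ‖ξ‖ ≤ l := by
        rw [hl]
        exact mul_le_mul_of_nonneg_left (hBall _ hrnn) (le_of_lt hγ)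
      obtain ⟨hq1, hq2', hq3⟩ := pse_mu_cone hθ' hsd0 hsdl (le_of_lt hl1)
      have hpne : (1 + θ * ((ρ ‖ξ‖ / ‖ξ‖ : ℝ):ℂ)) ≠ 0 := by
        intro h0
        have h0' : (1 + θ * ((ρ ‖ξ‖ / ‖ξ‖ : ℝ):ℂ)).re = 0 := by rw [h0]; rfl
        rw [h0'] at hp1
        linarith
      have hqne : (1 + θ * ((deriv ρ ‖ξ‖ : ℝ):ℂ)) ≠ 0 := by
        intro h0
        have h0' : (1 + θ * ((deriv ρ ‖ξ‖ : ℝ):ℂ)).re = 0 := by rw [h0]; rfl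
        rw [h0'] at hq1
        linarith
      rw [pse_qForm_eq ρ θ ξ ξs hxi hpne hqne]
      set t2 : ℝ := (∑ j, ξ j * ξs j)^2/‖ξ‖^2 with ht2
      set s2 : ℝ := (∑ j, (ξs j)^2) - t2 with hs2
      have ht2nn : 0 ≤ t2 := by rw [ht2]; positivity
      have hs2nn : 0 ≤ s2 := by
        rw [hs2, ht2, sub_nonneg, div_le_iff₀ (by positivity : (0:ℝ) < ‖ξ‖^2)]
        calc (∑ j, ξ j * ξs j)^2 ≤ (∑ j, (ξ j)^2) * (∑ j, (ξs j)^2) :=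
              Finset.sum_mul_sq_le_sq_mul_sq _ _ _
          _ = (∑ j, (ξs j)^2) * ‖ξ‖^2 := by rw [← pse_norm_sq_eq_sum]; ring
      have hst : s2 + t2 = ‖ξs‖^2 := by rw [hs2, pse_norm_sq_eq_sum]; ring
      obtain ⟨hP1, hP2⟩ := hmusq _ hp1 hp2' hp3
      obtain ⟨hQ1, hQ2⟩ := hmusq _ hq1 hq2' hq3
      set X := ((1 + θ * ((ρ ‖ξ‖ / ‖ξ‖ : ℝ):ℂ))^2)⁻¹ with hX
      set Y := ((1 + θ * ((deriv ρ ‖ξ‖ : ℝ):ℂ))^2)⁻¹ with hY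
      have hre_eq : (X * ((s2:ℝ):ℂ) + Y * ((t2:ℝ):ℂ)).re = X.re * s2 + Y.re * t2 := by
        simp [Complex.add_re, Complex.mul_re]
      have him_eq : (X * ((s2:ℝ):ℂ) + Y * ((t2:ℝ):ℂ)).im = X.im * s2 + Y.im * t2 := by
        simp [Complex.add_im, Complex.mul_im]
      constructor
      · rw [hre_eq, ← hst]
        linarith only [mul_le_mul_of_nonneg_right hP1 hs2nn,
          mul_le_mul_of_nonneg_right hQ1 ht2nn]
      · rw [him_eq, hre_eq]
        have ht1 : |X.im * s2 + Y.im * t2| ≤ |X.im| * s2 + |Y.im| * t2 := by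
          calc |X.im * s2 + Y.im * t2| ≤ |X.im * s2| + |Y.im * t2| := abs_add_le _ _
            _ = |X.im| * s2 + |Y.im| * t2 := by
                rw [abs_mul, abs_mul, _root_.abs_of_nonneg hs2nn, _root_.abs_of_nonneg ht2nn]
        linarith only [ht1, mul_le_mul_of_nonneg_right hP2 hs2nn,
          mul_le_mul_of_nonneg_right hQ2 ht2nn]
  -- the `z` part
  have hzne : z ≠ 0 := by
    intro h0
    rw [h0] at hzabs
    simp at hzabs
    linarith only [hzabs]
  have hzre : z.re ≤ 0 := by
    have hc := Complex.cos_arg hzne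
    have hcle : Real.cos z.arg ≤ 0 :=
      Real.cos_nonpos_of_pi_div_two_le_of_le (le_of_lt hz1) (by linarith [Real.pi_pos])
    have habsne : ‖z‖ ≠ 0 := norm_ne_zero_iff.mpr hzne
    have h : z.re = Real.cos z.arg * ‖z‖ := by
      rw [hc]; field_simp
    rw [h]
    exact mul_nonpos_of_nonpos_of_nonneg hcle (norm_nonneg z)
  have hzim : 0 ≤ z.im := by
    have hs := Complex.sin_arg z
    have hsge : 0 ≤ Real.sin z.arg :=
      Real.sin_nonneg_of_nonneg_of_le_pi (by linarith [Real.pi_pos]) (le_of_lt hz2)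
    have habsne : ‖z‖ ≠ 0 := norm_ne_zero_iff.mpr hzne
    have h : z.im = Real.sin z.arg * ‖z‖ := by
      rw [hs]; field_simp
    rw [h]
    exact mul_nonneg hsge (norm_nonneg z)
  have habs2 : ‖z‖^2 = z.re^2 + z.im^2 := by
    rw [Complex.sq_norm, Complex.normSq_apply]; ring
  have hzkey : ‖z‖ ≤ z.im - z.re :=
    pse_abs_le_sub (norm_nonneg z) habs2 hzre hzim
  -- assemble
  set A := dotC (phiTheta ρ θ ξ) (phiTheta ρ θ ξ) with hAdef
  set bq := qForm ρ θ ξ ξs with hbq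
  set S := A - z - Complex.I * bq with hS
  have hAw : A = w^2 := pse_dotC_phi ρ θ ξ hρ00
  have hAre' : d2 * ‖ξ‖^2 ≤ A.re := by rw [hAw]; exact hAre
  have hAim : |A.im| ≤ k * A.re := by rw [hAw]; exact hA2
  have hSre : S.re = A.re - z.re + bq.im := by
    rw [hS]
    simp [Complex.sub_re, Complex.mul_re, Complex.I_re, Complex.I_im]
    all_goals ring
  have hSim : S.im = A.im - z.im - bq.re := by
    rw [hS]
    simp [Complex.sub_im, Complex.mul_im, Complex.I_re, Complex.I_im]
    all_goals ring
  obtain ⟨hbre, hbim⟩ := hb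
  have hbim' := abs_le.mp hbim
  have hAim' := abs_le.mp hAim
  have hbre0 : 0 ≤ bq.re := le_trans (by positivity) hbre
  have hAre0 : 0 ≤ A.re := le_trans (by positivity) hAre'
  have key : 2*Cv*(1 + ‖ξ‖^2 + ‖ξs‖^2) ≤ S.re - S.im := by
    have e1 : (1-k)*(d2*‖ξ‖^2) ≤ A.re - A.im := by
      have hp := mul_nonneg (sub_nonneg.mpr (le_of_lt hk1)) (sub_nonneg.mpr hAre')
      linarith only [hp, hAim'.2]
    have e2 : (1-k)*(d1*‖ξs‖^2) ≤ bq.re + bq.im := by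
      have hp := mul_nonneg (sub_nonneg.mpr (le_of_lt hk1)) (sub_nonneg.mpr hbre)
      linarith only [hp, hbim'.1]
    have e3 : (1:ℝ) ≤ z.im - z.re := by linarith only [hzkey, hzabs]
    have e4 : 2*Cv*‖ξ‖^2 ≤ (1-k)*(d2*‖ξ‖^2) := by
      linarith only [mul_le_mul_of_nonneg_right hmin1 (sq_nonneg ‖ξ‖)]
    have e5 : 2*Cv*‖ξs‖^2 ≤ (1-k)*(d1*‖ξs‖^2) := by
      linarith only [mul_le_mul_of_nonneg_right hmin2 (sq_nonneg ‖ξs‖)]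
    have e6 : S.re - S.im = (A.re - A.im) + (bq.re + bq.im) + (z.im - z.re) := by
      rw [hSre, hSim]; ring
    linarith only [e1, e2, e3, e4, e5, e6, hmin3]
  have habsS : ‖S‖^2 = S.re^2 + S.im^2 := by
    rw [Complex.sq_norm, Complex.normSq_apply]; ring
  have hfin : S.re - S.im ≤ 2 * ‖S‖ :=
    pse_sub_le_two_abs (norm_nonneg S) habsS
  linarith only [key, hfin]
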